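/- Integral comparison: Let α > 1, q ≥ 1 with q(1−α) > −1, and n ≥ 2 an integer. Then ∫_{n+1}^{∞} ((s−n)^{1−α} − (s−1)^{1−α})^q ds + ∫_{1}^{∞} (s^{1−α} − (s+n−1)^{1−α})^q ds ≤ C n^{q(1−α)+1} for a constant C depending only on α and q. -/

import Mathlib

open MeasureTheory Set

/-- Mean value theorem estimate: `s^(1-α) - (s+d)^(1-α) ≤ (α-1) * d * s^(-α)`. -/
lemma aux_mvt_rpow (α : ℝ) (hα : 1 < α) {s d : ℝ} (hs : 0 < s) (hd : 0 ≤ d) :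
    s ^ (1 - α) - (s + d) ^ (1 - α) ≤ (α - 1) * d * s ^ (-α) := by
  rcases eq_or_lt_of_le hd with rfl | hd
  · simp
  have hsd : s < s + d := by linarith
  obtain ⟨c, hc, hceq⟩ := exists_hasDerivAt_eq_slope (fun x => x ^ (1 - α))
      (fun x => (1 - α) * x ^ (1 - α - 1)) hsd
      (fun x hx => by
        have hx0 : x ≠ 0 := by
          have : 0 < x := lt_of_lt_of_le hs hx.1
          exact this.ne'
        exact (Real.continuousAt_rpow_const x (1 - α) (Or.inl hx0)).continuousWithinAt)
      (fun x hx => Real.hasDerivAt_rpow_const (Or.inl (lt_of_lt_of_le hs hx.1.le).ne'))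
  have hc0 : 0 < c := hs.trans hc.1
  have hss : s + d - s = d := by ring
  have hexp : (1 - α - 1) = -α := by ring
  rw [hss, hexp, eq_div_iff hd.ne'] at hceq
  have h1 : s ^ (1 - α) - (s + d) ^ (1 - α) = (α - 1) * c ^ (-α) * d := by
    linear_combination hceq
  rw [h1]
  have hcs : c ^ (-α) ≤ s ^ (-α) :=
    Real.rpow_le_rpow_of_nonpos hs hc.1.le (by linarith)
  have : (α - 1) * c ^ (-α) * d ≤ (α - 1) * s ^ (-α) * d := by
    apply mul_le_mul_of_nonneg_right _ hd.le
    exact mul_le_mul_of_nonneg_left hcs (by linarith)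
  linarith [this]

theorem integral_comparison_bound (α q : ℝ) (hα : 1 < α) (hq : 1 ≤ q)
    (hqα : q * (1 - α) > -1) :
    ∃ C : ℝ, 0 < C ∧ ∀ n : ℕ, 2 ≤ n →
      (∫ s in Set.Ioi ((n : ℝ) + 1),
          ((s - (n : ℝ)) ^ (1 - α) - (s - 1) ^ (1 - α)) ^ q)
        + (∫ s in Set.Ioi (1 : ℝ),
            (s ^ (1 - α) - (s + (n : ℝ) - 1) ^ (1 - α)) ^ q)
        ≤ C * (n : ℝ) ^ (q * (1 - α) + 1) := by
  set a : ℝ := q * (1 - α) with ha_def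
  have hq0 : 0 ≤ q := by linarith
  have ha1 : 0 < a + 1 := by linarith
  have ha0 : a < 0 := by nlinarith
  have hb : 1 < q * α := by nlinarith
  have hα1 : (0:ℝ) < α - 1 := by linarith
  have hC1 : 0 < 1 / (a + 1) := by positivity
  have hC2 : 0 < (α - 1) ^ q / (q * α - 1) :=
    div_pos (Real.rpow_pos_of_pos hα1 q) (by linarith)
  refine ⟨2 * (1 / (a + 1) + (α - 1) ^ q / (q * α - 1)), by linarith, ?_⟩
  intro n hn
  set m : ℝ := (n : ℝ) with hm_def
  have hm2 : (2:ℝ) ≤ m := by rw [hm_def]; exact_mod_cast hn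
  have hm0 : 0 < m := by linarith
  have hm1 : 1 ≤ m := by linarith
  -- the key bound for the second integral
  set f : ℝ → ℝ := fun s => (s ^ (1 - α) - (s + m - 1) ^ (1 - α)) ^ q with hf_def
  -- nonnegativity of f on Ioi 1
  have hfnn : ∀ x : ℝ, 1 < x → 0 ≤ f x := by
    intro x hx
    apply Real.rpow_nonneg
    have : (x + m - 1) ^ (1 - α) ≤ x ^ (1 - α) :=
      Real.rpow_le_rpow_of_nonpos (by linarith) (by linarith) (by linarith)
    linarith
  set G : ℝ → ℝ := fun s => (Ioc 1 m).indicator (fun s => s ^ a) s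
      + (Ioi m).indicator (fun s => ((α - 1) * m) ^ q * s ^ (-(q * α))) s with hG_def
  have hint1 : Integrable ((Ioc 1 m).indicator (fun s : ℝ => s ^ a)) := by
    rw [integrable_indicator_iff measurableSet_Ioc]
    have := intervalIntegral.intervalIntegrable_rpow' (a := 1) (b := m) (r := a)
      (by linarith)
    rw [intervalIntegrable_iff] at this
    rwa [Set.uIoc_of_le hm1] at this
  have hint2 : Integrable ((Ioi m).indicator
      (fun s : ℝ => ((α - 1) * m) ^ q * s ^ (-(q * α)))) := by
    rw [integrable_indicator_iff measurableSet_Ioi]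
    exact (integrableOn_Ioi_rpow_of_lt (by linarith) hm0).const_mul _
  have hGint : Integrable G := hint1.add hint2
  have hGnn : ∀ x : ℝ, 0 ≤ G x := by
    intro x
    apply add_nonneg
    · apply Set.indicator_nonneg
      intro y hy
      exact Real.rpow_nonneg (by linarith [hy.1]) _
    · apply Set.indicator_nonneg
      intro y hy
      have hy0 : 0 < y := lt_trans hm0 hy
      positivity
  -- pointwise bound
  have hbound : ∀ x : ℝ, (Ioi (1:ℝ)).indicator f x ≤ G x := by
    intro x
    by_cases hx : 1 < x
    · rw [Set.indicator_of_mem (Set.mem_Ioi.mpr hx)]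
      have hx0 : 0 < x := by linarith
      by_cases hxm : x ≤ m
      · have h1 : (Ioc 1 m).indicator (fun s : ℝ => s ^ a) x = x ^ a :=
          Set.indicator_of_mem (Set.mem_Ioc.mpr ⟨hx, hxm⟩) _
        have h2 : (Ioi m).indicator
            (fun s : ℝ => ((α - 1) * m) ^ q * s ^ (-(q * α))) x = 0 :=
          Set.indicator_of_notMem (by simpa using hxm) _
        rw [hG_def]
        simp only [h1, h2, add_zero]
        have hd : x ^ (1 - α) - (x + m - 1) ^ (1 - α) ≤ x ^ (1 - α) := by
          have : 0 ≤ (x + m - 1) ^ (1 - α) := Real.rpow_nonneg (by linarith) _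
          linarith
        have hdnn : 0 ≤ x ^ (1 - α) - (x + m - 1) ^ (1 - α) := by
          have : (x + m - 1) ^ (1 - α) ≤ x ^ (1 - α) :=
            Real.rpow_le_rpow_of_nonpos hx0 (by linarith) (by linarith)
          linarith
        calc f x ≤ (x ^ (1 - α)) ^ q := Real.rpow_le_rpow hdnn hd hq0
          _ = x ^ a := by
            rw [← Real.rpow_mul hx0.le, show (1 - α) * q = a by rw [ha_def]; ring]
      · push_neg at hxm
        have h1 : (Ioc 1 m).indicator (fun s : ℝ => s ^ a) x = 0 :=
          Set.indicator_of_notMem (fun h => absurd h.2 (not_le.mpr hxm)) _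
        have h2 : (Ioi m).indicator
            (fun s : ℝ => ((α - 1) * m) ^ q * s ^ (-(q * α))) x
            = ((α - 1) * m) ^ q * x ^ (-(q * α)) :=
          Set.indicator_of_mem (Set.mem_Ioi.mpr hxm) _
        rw [hG_def]
        simp only [h1, h2, zero_add]
        have hmvt : x ^ (1 - α) - (x + m - 1) ^ (1 - α) ≤ (α - 1) * m * x ^ (-α) := by
          have := aux_mvt_rpow α hα (s := x) (d := m - 1) hx0 (by linarith)
          have hrw : x + (m - 1) = x + m - 1 := by ring
          rw [hrw] at this
          have hx' : 0 ≤ x ^ (-α) := Real.rpow_nonneg hx0.le _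
          nlinarith
        have hdnn : 0 ≤ x ^ (1 - α) - (x + m - 1) ^ (1 - α) := by
          have : (x + m - 1) ^ (1 - α) ≤ x ^ (1 - α) :=
            Real.rpow_le_rpow_of_nonpos hx0 (by linarith) (by linarith)
          linarith
        calc f x ≤ ((α - 1) * m * x ^ (-α)) ^ q := Real.rpow_le_rpow hdnn hmvt hq0
          _ = ((α - 1) * m) ^ q * x ^ (-(q * α)) := by
            rw [Real.mul_rpow (by positivity) (Real.rpow_nonneg hx0.le _),
              ← Real.rpow_mul hx0.le, show -α * q = -(q * α) by ring]
    · rw [Set.indicator_of_notMem (by simpa using hx : x ∉ Ioi (1:ℝ))]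
      exact hGnn x
  -- the integral bound
  have hkey : (∫ s in Set.Ioi (1:ℝ), f s)
      ≤ (1 / (a + 1) + (α - 1) ^ q / (q * α - 1)) * m ^ (a + 1) := by
    have step1 : (∫ s in Set.Ioi (1:ℝ), f s) ≤ ∫ x, G x := by
      rw [← integral_indicator measurableSet_Ioi]
      apply integral_mono_of_nonneg
      · filter_upwards with x
        apply Set.indicator_nonneg
        intro y hy
        exact hfnn y hy
      · exact hGint
      · filter_upwards with x
        exact hbound x
    have hI1 : (∫ x, (Ioc 1 m).indicator (fun s : ℝ => s ^ a) x)
        ≤ m ^ (a + 1) / (a + 1) := by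
      rw [integral_indicator measurableSet_Ioc,
        ← intervalIntegral.integral_of_le hm1,
        integral_rpow (Or.inl (by linarith : (-1:ℝ) < a))]
      rw [Real.one_rpow]
      exact (div_le_div_iff_of_pos_right ha1).mpr (by linarith)
    have hI2 : (∫ x, (Ioi m).indicator
        (fun s : ℝ => ((α - 1) * m) ^ q * s ^ (-(q * α))) x)
        = (α - 1) ^ q / (q * α - 1) * m ^ (a + 1) := by
      rw [integral_indicator measurableSet_Ioi, integral_const_mul,
        integral_Ioi_rpow_of_lt (by linarith) hm0]
      rw [Real.mul_rpow hα1.le hm0.le]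
      have h2 : m ^ q * m ^ (-(q * α) + 1) = m ^ (a + 1) := by
        rw [← Real.rpow_add hm0]
        congr 1
        rw [ha_def]; ring
      rw [← h2]
      have hne1 : (-(q * α) + 1) ≠ 0 := by intro h; nlinarith
      have hne2 : q * α - 1 ≠ 0 := by intro h; nlinarith
      field_simp
      ring_nf; rw [neg_inv]; ring
    calc (∫ s in Set.Ioi (1:ℝ), f s) ≤ ∫ x, G x := step1
      _ = (∫ x, (Ioc 1 m).indicator (fun s : ℝ => s ^ a) x)
          + ∫ x, (Ioi m).indicator
            (fun s : ℝ => ((α - 1) * m) ^ q * s ^ (-(q * α))) x :=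
        integral_add hint1 hint2
      _ ≤ m ^ (a + 1) / (a + 1) + (α - 1) ^ q / (q * α - 1) * m ^ (a + 1) := by
        rw [hI2]; linarith [hI1]
      _ = (1 / (a + 1) + (α - 1) ^ q / (q * α - 1)) * m ^ (a + 1) := by ring
  -- the first integral equals the second
  have hshift : (∫ s in Set.Ioi (m + 1),
      ((s - m) ^ (1 - α) - (s - 1) ^ (1 - α)) ^ q)
      = ∫ s in Set.Ioi (1:ℝ), f s := by
    rw [← integral_indicator measurableSet_Ioi, ← integral_indicator measurableSet_Ioi]
    rw [← integral_add_right_eq_self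
      (fun x => (Ioi (m + 1)).indicator
        (fun s => ((s - m) ^ (1 - α) - (s - 1) ^ (1 - α)) ^ q) x) m]
    congr 1
    funext x
    by_cases hx : 1 < x
    · rw [Set.indicator_of_mem (show x + m ∈ Ioi (m + 1) by simp only [Set.mem_Ioi]; linarith),
        Set.indicator_of_mem (Set.mem_Ioi.mpr hx)]
      simp only [hf_def]
      congr 2 <;> ring_nf
    · rw [Set.indicator_of_notMem
          (show x + m ∉ Ioi (m + 1) by simp only [Set.mem_Ioi]; intro h; exact hx (by linarith)),
        Set.indicator_of_notMem (by simpa using hx : x ∉ Ioi (1:ℝ))]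
  rw [hshift]
  calc (∫ s in Set.Ioi (1:ℝ), f s) + ∫ s in Set.Ioi (1:ℝ), f s
      ≤ 2 * ((1 / (a + 1) + (α - 1) ^ q / (q * α - 1)) * m ^ (a + 1)) := by linarith
    _ = 2 * (1 / (a + 1) + (α - 1) ^ q / (q * α - 1)) * m ^ (a + 1) := by ring
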